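/- Let A be a unital associative k-algebra, p, q ∈ k, and X ⊆ k. Define R(u,v) : A ⊗ A → A ⊗ A by R(u,v)(a ⊗ b) = p(u−v)·1 ⊗ ab + q(u−v)·ab ⊗ 1 − (pu−qv)·b ⊗ a. Then for all u, v, w ∈ X: R¹²(u,v) ∘ R¹³(u,w) ∘ R²³(v,w) = R²³(v,w) ∘ R¹³(u,w) ∘ R¹²(u,v). -/

import Mathlib

open TensorProduct

noncomputable def r12 (k V : Type*) [Field k] [AddCommGroup V] [Module k V]
    (R : V ⊗[k] V →ₗ[k] V ⊗[k] V) :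
    (V ⊗[k] V) ⊗[k] V →ₗ[k] (V ⊗[k] V) ⊗[k] V :=
  TensorProduct.map R LinearMap.id

noncomputable def r23 (k V : Type*) [Field k] [AddCommGroup V] [Module k V]
    (R : V ⊗[k] V →ₗ[k] V ⊗[k] V) :
    (V ⊗[k] V) ⊗[k] V →ₗ[k] (V ⊗[k] V) ⊗[k] V :=
  (TensorProduct.assoc k V V V).symm.toLinearMap ∘ₗ
    TensorProduct.map LinearMap.id R ∘ₗ (TensorProduct.assoc k V V V).toLinearMap

noncomputable def tau (k V : Type*) [Field k] [AddCommGroup V] [Module k V] :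
    V ⊗[k] V →ₗ[k] V ⊗[k] V :=
  (TensorProduct.comm k V V).toLinearMap

noncomputable def r13 (k V : Type*) [Field k] [AddCommGroup V] [Module k V]
    (R : V ⊗[k] V →ₗ[k] V ⊗[k] V) :
    (V ⊗[k] V) ⊗[k] V →ₗ[k] (V ⊗[k] V) ⊗[k] V :=
  r23 k V (tau k V) ∘ₗ r12 k V R ∘ₗ r23 k V (tau k V)

/-- The braid equation. -/
def IsBraid (k V : Type*) [Field k] [AddCommGroup V] [Module k V]
    (R : V ⊗[k] V →ₗ[k] V ⊗[k] V) : Prop :=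
  r12 k V R ∘ₗ r23 k V R ∘ₗ r12 k V R = r23 k V R ∘ₗ r12 k V R ∘ₗ r23 k V R

/-- The (constant) quantum Yang–Baxter equation. -/
def IsQYBE (k V : Type*) [Field k] [AddCommGroup V] [Module k V]
    (R : V ⊗[k] V →ₗ[k] V ⊗[k] V) : Prop :=
  r12 k V R ∘ₗ r13 k V R ∘ₗ r23 k V R = r23 k V R ∘ₗ r13 k V R ∘ₗ r12 k V R

theorem colored_qybe_of_algebra
    (k A : Type*) [Field k] [Ring A] [Algebra k A]
    (p q : k) (X : Set k)
    (R : k → k → (A ⊗[k] A →ₗ[k] A ⊗[k] A))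
    (hR : ∀ u v : k, ∀ a b : A, R u v (a ⊗ₜ b) =
      (p * (u - v)) • ((1 : A) ⊗ₜ (a * b)) + (q * (u - v)) • ((a * b) ⊗ₜ (1 : A))
        - (p * u - q * v) • (b ⊗ₜ a)) :
    ∀ u ∈ X, ∀ v ∈ X, ∀ w ∈ X,
      r12 k A (R u v) ∘ₗ r13 k A (R u w) ∘ₗ r23 k A (R v w) =
        r23 k A (R v w) ∘ₗ r13 k A (R u w) ∘ₗ r12 k A (R u v) := by
  intro u _ v _ w _
  apply TensorProduct.ext
  apply TensorProduct.ext
  ext a b c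
  simp only [r12, r23, r13, tau, LinearMap.comp_apply, TensorProduct.map_tmul,
    LinearMap.id_coe, id_eq, LinearEquiv.coe_coe, TensorProduct.assoc_tmul,
    TensorProduct.assoc_symm_tmul, TensorProduct.comm_tmul, hR,
    TensorProduct.tmul_add, TensorProduct.add_tmul, TensorProduct.tmul_sub,
    TensorProduct.sub_tmul, TensorProduct.tmul_smul, ← TensorProduct.smul_tmul',
    map_add, map_sub, map_smul, LinearMap.compr₂_apply, LinearMap.compr₂ₛₗ_apply, LinearMap.mk₂_apply, TensorProduct.mk_apply,
    one_mul, mul_one, mul_assoc, smul_mul_assoc, mul_smul_comm, smul_smul]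
  module
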